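/- The real submanifold 𝓜 ⊆ ℂ^4, defined in coordinates (z, w_1, w_2, w_3) by the three equations w_1 − conj(w_1) = 2i z conj(z), w_2 − conj(w_2) = 2i z conj(z)(z + conj(z)), and w_3 − conj(w_3) = 2i z conj(z)(z² + (3/2) z conj(z) + conj(z)²), is homogeneous: for every point (p, q_1, q_2, q_3) ∈ 𝓜 there exists a map Φ : ℂ^4 → ℂ^4 whose components are holomorphic polynomials, which is bijective with inverse also given by holomorphic polynomials, and which satisfies Φ(0,0,0,0) = (p, q_1, q_2, q_3) and Φ(𝓜) = 𝓜. -/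

import Mathlib

/-!
STATEMENT 12: the real submanifold 𝓜 ⊆ ℂ⁴ defined by
  w₁ − w̄₁ = 2i z z̄,
  w₂ − w̄₂ = 2i z z̄ (z + z̄),
  w₃ − w̄₃ = 2i z z̄ (z² + (3/2) z z̄ + z̄²)
is homogeneous: every point of 𝓜 is the image of the origin under a polynomial
biholomorphism of ℂ⁴ (with polynomial inverse) preserving 𝓜.
-/

open MvPolynomial Complex

noncomputable section

/-- Points of ℂ⁴ in coordinates (z, w₁, w₂, w₃): coordinate 0 is z, coordinates 1, 2, 3
are w₁, w₂, w₃. -/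
abbrev Pt := Fin 4 → ℂ

/-- The CR-manifold 𝓜 ⊆ ℂ⁴. -/
def Mcal : Set Pt :=
  {p | p 1 - starRingEnd ℂ (p 1) = 2 * I * p 0 * starRingEnd ℂ (p 0) ∧
       p 2 - starRingEnd ℂ (p 2) =
         2 * I * p 0 * starRingEnd ℂ (p 0) * (p 0 + starRingEnd ℂ (p 0)) ∧
       p 3 - starRingEnd ℂ (p 3) =
         2 * I * p 0 * starRingEnd ℂ (p 0) *
           ((p 0) ^ 2 + (3 / 2 : ℂ) * p 0 * starRingEnd ℂ (p 0) +
             (starRingEnd ℂ (p 0)) ^ 2)}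

/-- The map ℂ⁴ → ℂ⁴ whose components are given by the four polynomials `P i`. -/
def polyMap (P : Fin 4 → MvPolynomial (Fin 4) ℂ) : Pt → Pt :=
  fun x i => eval x (P i)

set_option maxHeartbeats 2000000 in
theorem stmt12 :
    ∀ p ∈ Mcal, ∃ P Q : Fin 4 → MvPolynomial (Fin 4) ℂ,
      -- `polyMap P` is bijective, with inverse the polynomial map `polyMap Q` :
      (polyMap P) ∘ (polyMap Q) = id ∧
      (polyMap Q) ∘ (polyMap P) = id ∧
      -- it maps the origin to the point p :
      polyMap P 0 = p ∧
      -- and it preserves 𝓜 :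
      polyMap P '' Mcal = Mcal := by
  intro p hp
  obtain ⟨hp1, hp2, hp3⟩ := hp
  set a : ℂ := p 0 with ha
  set ab : ℂ := starRingEnd ℂ (p 0) with hab
  -- the forward map Φ
  set P : Fin 4 → MvPolynomial (Fin 4) ℂ :=
    ![X 0 + C a,
      X 1 + C (2 * I * ab) * X 0 + C (p 1),
      X 2 + C (2 * I * ab) * X 0 ^ 2 + C (4 * I * a * ab + 2 * I * ab ^ 2) * X 0
        + C (2 * (a + ab)) * X 1 + C (p 2),
      X 3 + C (2 * I * ab) * X 0 ^ 3 + C (3 * I * ab ^ 2 + 6 * I * a * ab) * X 0 ^ 2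
        + C (2 * I * ab ^ 3 + 6 * I * a * ab ^ 2 + 6 * I * a ^ 2 * ab) * X 0
        + C (3 * (a + ab) ^ 2) * X 1 + C (3 * (a + ab)) * X 2 + C (p 3)] with hP
  -- the inverse map
  set Q : Fin 4 → MvPolynomial (Fin 4) ℂ :=
    ![X 0 - C a,
      X 1 - C (2 * I * ab) * (X 0 - C a) - C (p 1),
      X 2 - C (2 * I * ab) * (X 0 - C a) ^ 2 - C (4 * I * a * ab + 2 * I * ab ^ 2) * (X 0 - C a)
        - C (2 * (a + ab)) * (X 1 - C (2 * I * ab) * (X 0 - C a) - C (p 1)) - C (p 2),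
      X 3 - C (2 * I * ab) * (X 0 - C a) ^ 3 - C (3 * I * ab ^ 2 + 6 * I * a * ab) * (X 0 - C a) ^ 2
        - C (2 * I * ab ^ 3 + 6 * I * a * ab ^ 2 + 6 * I * a ^ 2 * ab) * (X 0 - C a)
        - C (3 * (a + ab) ^ 2) * (X 1 - C (2 * I * ab) * (X 0 - C a) - C (p 1))
        - C (3 * (a + ab)) *
            (X 2 - C (2 * I * ab) * (X 0 - C a) ^ 2
              - C (4 * I * a * ab + 2 * I * ab ^ 2) * (X 0 - C a)
              - C (2 * (a + ab)) * (X 1 - C (2 * I * ab) * (X 0 - C a) - C (p 1)) - C (p 2))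
        - C (p 3)] with hQ
  have hcab : starRingEnd ℂ ab = a := by rw [hab, Complex.conj_conj, ha]
  refine ⟨P, Q, ?_, ?_, ?_, ?_⟩
  · funext x
    funext i
    fin_cases i <;>
      simp [polyMap, hP, hQ] <;> ring
  · funext x
    funext i
    fin_cases i <;>
      simp [polyMap, hP, hQ] <;> ring
  · funext i
    fin_cases i <;>
      simp [polyMap, hP, hp1, hp2, hp3, ha]
  · apply Set.eq_of_subset_of_subset
    · rintro _ ⟨x, ⟨hx1, hx2, hx3⟩, rfl⟩
      refine ⟨?_, ?_, ?_⟩ <;>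
        simp only [polyMap, hP, Matrix.cons_val_zero, Matrix.cons_val_one, Matrix.head_cons,
          Matrix.cons_val_two, Matrix.tail_cons, Matrix.cons_val_three, map_add, map_sub, map_mul,
          map_pow, eval_X, eval_C, map_ofNat, Complex.conj_I, Complex.conj_conj, map_div₀, hcab,
          ← ha, ← hab]
      · linear_combination hx1 + hp1
      · linear_combination hx2 + hp2 + (2 * (a + ab)) * hx1
      · linear_combination hx3 + hp3 + (3 * (a + ab) ^ 2) * hx1 + (3 * (a + ab)) * hx2
    · intro y hy
      obtain ⟨hy1, hy2, hy3⟩ := hy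
      refine ⟨polyMap Q y, ⟨?_, ?_, ?_⟩, ?_⟩
      · simp only [polyMap, hQ, Matrix.cons_val_zero, Matrix.cons_val_one, Matrix.head_cons,
          map_add, map_sub, map_mul, map_pow, eval_X, eval_C, map_ofNat, Complex.conj_I,
          Complex.conj_conj, map_div₀, hcab, ← ha, ← hab]
        linear_combination hy1 - hp1
      · simp only [polyMap, hQ, Matrix.cons_val_zero, Matrix.cons_val_one, Matrix.head_cons,
          Matrix.cons_val_two, Matrix.tail_cons, map_add, map_sub, map_mul, map_pow, eval_X,
          eval_C, map_ofNat, Complex.conj_I, Complex.conj_conj, map_div₀, hcab, ← ha, ← hab]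
        linear_combination hy2 - hp2 - (2 * (a + ab)) * hy1 + (2 * (a + ab)) * hp1
      · simp only [polyMap, hQ, Matrix.cons_val_zero, Matrix.cons_val_one, Matrix.head_cons,
          Matrix.cons_val_two, Matrix.tail_cons, Matrix.cons_val_three, map_add, map_sub, map_mul,
          map_pow, eval_X, eval_C, map_ofNat, Complex.conj_I, Complex.conj_conj, map_div₀, hcab,
          ← ha, ← hab]
        linear_combination hy3 - hp3 + (3 * (a + ab) ^ 2) * hy1 - (3 * (a + ab) ^ 2) * hp1 - (3 * (a + ab)) * hy2 + (3 * (a + ab)) * hp2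
      · funext i
        fin_cases i <;>
          simp [polyMap, hP, hQ] <;> ring
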